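/- Let H be a real Hilbert space and (J,≤) a partially ordered set with a least element ⊥ in which every principal down-set {i ∈ J : i ≤ j} is finite. Let (W_i)_{i∈J} be pairwise orthogonal closed subspaces of H with W_⊥ ≠ {0}, set V_j := ∑_{i ≤ j} W_i, and let a : J → (0,∞). Then the seminorm |f|²_{V,a} := inf { ∑_{j∈F} a_j ‖v_j‖² : F ⊆ J finite, v_j ∈ V_j, ∑_{j∈F} v_j = f } is positive definite on the algebraic span of the subspaces W_i (i.e., |f|_{V,a} = 0 implies f = 0) if and only if ∑_{j∈J} a_j⁻¹ < ∞. -/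

import Mathlib

/-- Proposition 4(a).
Let `H` be a real Hilbert space, `(J, ≤)` a partially ordered set with least element `⊥`, in
which every principal down-set is finite, `(W i)` pairwise orthogonal closed subspaces of `H`
with `W ⊥ ≠ {0}`, `V j = ∑_{i ≤ j} W i`, and `a : J → (0,∞)`.  Then the seminorm
`|f|²_{V,a} = inf { ∑_{j∈F} a j ‖v j‖² : v j ∈ V j, ∑_{j∈F} v j = f }` is positive definite on
the algebraic span of the `W i` if and only if `∑ j, (a j)⁻¹ < ∞`. -/
theorem stmt6 {H : Type*} [NormedAddCommGroup H] [InnerProductSpace ℝ H] [CompleteSpace H]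
    {J : Type*} [PartialOrder J] [OrderBot J]
    (hJ : ∀ j : J, {i | i ≤ j}.Finite)
    (W : J → Submodule ℝ H) (hWc : ∀ i, IsClosed (W i : Set H))
    (hortho : ∀ i j, i ≠ j → ∀ u ∈ W i, ∀ v ∈ W j, inner ℝ u v = (0 : ℝ))
    (hbot : W ⊥ ≠ ⊥)
    (a : J → ℝ) (ha : ∀ j, 0 < a j) :
    (∀ f ∈ (⨆ i, W i : Submodule ℝ H),
        sInf {r : ℝ | ∃ (F : Finset J) (v : J → H),
            (∀ j ∈ F, v j ∈ (⨆ i ≤ j, W i : Submodule ℝ H)) ∧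
            (∑ j ∈ F, v j) = f ∧ r = ∑ j ∈ F, a j * ‖v j‖ ^ 2} = 0 → f = 0) ↔
    Summable (fun j => (a j)⁻¹) := by
  constructor
  · -- positive definite → summable
    intro hpd
    by_contra hns
    -- get nonzero w ∈ W ⊥
    obtain ⟨w, hw, hw0⟩ : ∃ w ∈ W ⊥, w ≠ 0 := by
      simpa using (Submodule.ne_bot_iff _).mp hbot
    -- w ∈ ⨆ i, W i
    have hwmem : w ∈ (⨆ i, W i : Submodule ℝ H) :=
      Submodule.mem_iSup_of_mem ⊥ hw
    set S := {r : ℝ | ∃ (F : Finset J) (v : J → H),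
        (∀ j ∈ F, v j ∈ (⨆ i ≤ j, W i : Submodule ℝ H)) ∧
        (∑ j ∈ F, v j) = w ∧ r = ∑ j ∈ F, a j * ‖v j‖ ^ 2} with hS
    have hSnonneg : ∀ r ∈ S, (0:ℝ) ≤ r := by
      rintro r ⟨F, v, -, -, rfl⟩
      exact Finset.sum_nonneg fun j _ => mul_nonneg (ha j).le (by positivity)
    have hSbdd : BddBelow S := ⟨0, hSnonneg⟩
    -- trivial element
    have hSne : S.Nonempty := by
      refine ⟨a ⊥ * ‖w‖ ^ 2, {⊥}, fun _ => w, ?_, by simp, by simp⟩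
      intro j hj
      exact Submodule.mem_iSup_of_mem ⊥ (Submodule.mem_iSup_of_mem bot_le hw)
    -- unbounded partial sums
    have hub : ∀ C : ℝ, ∃ F : Finset J, C < ∑ j ∈ F, (a j)⁻¹ := by
      intro C
      by_contra h
      push_neg at h
      exact hns (summable_of_sum_le (fun j => (inv_pos.2 (ha j)).le) h)
    -- sInf S = 0
    have hInf : sInf S = 0 := by
      have h0 : 0 ≤ sInf S := le_csInf hSne hSnonneg
      have h1 : sInf S ≤ 0 := by
        refine le_of_forall_pos_le_add ?_
        intro ε hε
        obtain ⟨F, hF⟩ := hub (max (‖w‖ ^ 2 / ε) 0)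
        set s := ∑ j ∈ F, (a j)⁻¹ with hs
        have hspos : 0 < s := lt_of_le_of_lt (le_max_right _ _) hF
        have hmem : ‖w‖ ^ 2 / s ∈ S := by
          refine ⟨F, fun j => ((a j)⁻¹ / s) • w, ?_, ?_, ?_⟩
          · intro j hj
            exact Submodule.smul_mem _ _
              (Submodule.mem_iSup_of_mem ⊥ (Submodule.mem_iSup_of_mem bot_le hw))
          · rw [← Finset.sum_smul]
            rw [← Finset.sum_div, ← hs, div_self hspos.ne', one_smul]
          · rw [eq_comm]
            have : ∀ j ∈ F, a j * ‖((a j)⁻¹ / s) • w‖ ^ 2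
                = ((a j)⁻¹ / s ^ 2) * ‖w‖ ^ 2 := by
              intro j hj
              rw [norm_smul, Real.norm_eq_abs, mul_pow, sq_abs]
              have haj := (ha j).ne'
              field_simp
            rw [Finset.sum_congr rfl this, ← Finset.sum_mul, ← Finset.sum_div, ← hs]
            rw [sq]
            field_simp
          
        have hlt : ‖w‖ ^ 2 / s ≤ ε := by
          rw [div_le_iff₀ hspos]
          calc ‖w‖ ^ 2 = ε * (‖w‖^2/ε) := by field_simp
          _ ≤ ε * s := by
            have : ‖w‖^2/ε ≤ s := le_of_lt (lt_of_le_of_lt (le_max_left _ _) hF)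
            exact mul_le_mul_of_nonneg_left this hε.le
        calc sInf S ≤ ‖w‖ ^ 2 / s := csInf_le hSbdd hmem
        _ ≤ ε := hlt
        _ = 0 + ε := (zero_add ε).symm
      linarith
    exact hw0 (hpd w hwmem hInf)
  · -- summable → positive definite
    intro hsum f hf hInf
    set A := ∑' j, (a j)⁻¹ with hA
    have hA0 : 0 ≤ A := tsum_nonneg fun j => (inv_pos.2 (ha j)).le
    set S := {r : ℝ | ∃ (F : Finset J) (v : J → H),
        (∀ j ∈ F, v j ∈ (⨆ i ≤ j, W i : Submodule ℝ H)) ∧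
        (∑ j ∈ F, v j) = f ∧ r = ∑ j ∈ F, a j * ‖v j‖ ^ 2} with hS
    -- S nonempty
    have hSne : S.Nonempty := by
      rw [Submodule.mem_iSup_iff_exists_finsupp] at hf
      obtain ⟨c, hc, hcs⟩ := hf
      refine ⟨∑ j ∈ c.support, a j * ‖c j‖ ^ 2, c.support, c, ?_, ?_, rfl⟩
      · intro j hj
        exact Submodule.mem_iSup_of_mem j (Submodule.mem_iSup_of_mem le_rfl (hc j))
      · exact hcs
    -- key estimate
    have hkey : ∀ r ∈ S, ‖f‖ ^ 2 ≤ A * r := by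
      rintro r ⟨F, v, -, hsumv, rfl⟩
      have h1 : ‖f‖ ≤ ∑ j ∈ F, ‖v j‖ := hsumv ▸ norm_sum_le F v
      have h2 : (∑ j ∈ F, ‖v j‖) ^ 2
          ≤ (∑ j ∈ F, (a j)⁻¹) * ∑ j ∈ F, a j * ‖v j‖ ^ 2 := by
        have := Finset.sum_mul_sq_le_sq_mul_sq F
          (fun j => Real.sqrt (a j)⁻¹) (fun j => Real.sqrt (a j) * ‖v j‖)
        have e1 : ∀ j ∈ F, Real.sqrt (a j)⁻¹ * (Real.sqrt (a j) * ‖v j‖) = ‖v j‖ := by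
          intro j hj
          rw [← mul_assoc, ← Real.sqrt_mul (inv_pos.2 (ha j)).le,
            inv_mul_cancel₀ (ha j).ne', Real.sqrt_one, one_mul]
        have e2 : ∀ j ∈ F, Real.sqrt (a j)⁻¹ ^ 2 = (a j)⁻¹ := by
          intro j hj; exact Real.sq_sqrt (inv_pos.2 (ha j)).le
        have e3 : ∀ j ∈ F, (Real.sqrt (a j) * ‖v j‖) ^ 2 = a j * ‖v j‖ ^ 2 := by
          intro j hj; rw [mul_pow, Real.sq_sqrt (ha j).le]
        rwa [Finset.sum_congr rfl e1, Finset.sum_congr rfl e2,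
          Finset.sum_congr rfl e3] at this
      have h3 : (∑ j ∈ F, (a j)⁻¹) ≤ A :=
        Summable.sum_le_tsum F (fun j _ => (inv_pos.2 (ha j)).le) hsum
      calc ‖f‖ ^ 2 ≤ (∑ j ∈ F, ‖v j‖) ^ 2 := by
            apply pow_le_pow_left₀ (norm_nonneg f) h1
      _ ≤ (∑ j ∈ F, (a j)⁻¹) * ∑ j ∈ F, a j * ‖v j‖ ^ 2 := h2
      _ ≤ A * ∑ j ∈ F, a j * ‖v j‖ ^ 2 := by
            refine mul_le_mul_of_nonneg_right h3 ?_
            exact Finset.sum_nonneg fun j _ => mul_nonneg (ha j).le (by positivity)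
    -- conclude
    have hf2 : ‖f‖ ^ 2 ≤ 0 := by
      rcases eq_or_lt_of_le hA0 with hA0' | hApos
      · obtain ⟨r, hr⟩ := hSne
        have := hkey r hr
        rw [← hA0', zero_mul] at this
        exact this
      · have : ‖f‖ ^ 2 / A ≤ sInf S := by
          refine le_csInf hSne fun r hr => ?_
          rw [div_le_iff₀ hApos, mul_comm]
          exact hkey r hr
        rw [hInf, div_le_iff₀ hApos, zero_mul] at this
        exact this
    have : ‖f‖ = 0 := by nlinarith [norm_nonneg f, sq_nonneg ‖f‖]
    exact norm_eq_zero.mp this
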